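/- Fix h > 0. Let φ : ℤ → ℂ and A₀, A₂ : ℤ → ℝ satisfy, for all n ∈ ℤ, (A₀(n+1) − A₀(n))/h = A₂(n)|φ(n)|² and (A₂(n+1) − A₂(n))/h = (1/2)|φ(n)|². Then the function g(n) = A₀(n) − A₂(n)² satisfies, for all n ∈ ℤ, (g(n+1) − g(n))/h = −(h/4)|φ(n)|⁴. -/

import Mathlib

/-- **Reduction of the gauge constraints**: if `∇₁⁺A₀ = A₂|φ|²` and `∇₁⁺A₂ = ½|φ|²`
on the lattice of spacing `h`, then `g = A₀ − A₂²` satisfies `∇₁⁺g = −(h/4)|φ|⁴`. -/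
theorem discrete_CSS_gauge_reduction
    (h : ℝ) (hh : 0 < h) (φ : ℤ → ℂ) (A₀ A₂ : ℤ → ℝ)
    (h0 : ∀ n : ℤ, (A₀ (n + 1) - A₀ n) / h = A₂ n * ‖φ n‖ ^ 2)
    (h2 : ∀ n : ℤ, (A₂ (n + 1) - A₂ n) / h = (1 / 2) * ‖φ n‖ ^ 2) :
    ∀ n : ℤ, ((A₀ (n + 1) - A₂ (n + 1) ^ 2) - (A₀ n - A₂ n ^ 2)) / h
      = -(h / 4) * ‖φ n‖ ^ 4 := by
  intro n
  have hne : h ≠ 0 := ne_of_gt hh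
  have e0 : A₀ (n + 1) = A₀ n + h * (A₂ n * ‖φ n‖ ^ 2) := by
    have := h0 n; field_simp at this; linarith
  have e2 : A₂ (n + 1) = A₂ n + h * ((1 / 2) * ‖φ n‖ ^ 2) := by
    have := h2 n; field_simp at this; linarith
  rw [e0, e2]
  field_simp
  ring
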